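/- Let s be a rational number and let r > 0 be a real number with r^2 rational. Then r · J_{s+1}(r) / J_s(r) is irrational. -/

import Mathlib

/-- The Bessel function of the first kind of order `ν`, for `r > 0`:
`J_ν(r) = ∑_{k=0}^∞ ((-1)^k / (k! Γ(ν+k+1))) (r/2)^(ν+2k)`. -/
noncomputable def besselJ (ν r : ℝ) : ℝ :=
  ∑' k : ℕ, ((-1 : ℝ) ^ k / (k.factorial * Real.Gamma (ν + k + 1))) *
    (r / 2) ^ (ν + 2 * (k : ℝ))

open Real


lemma gamma_ratio (x : ℝ) : x / Gamma (x+1) = 1 / Gamma x := by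
  rcases eq_or_ne x 0 with h | h
  · simp [h, Real.Gamma_zero]
  · rw [Real.Gamma_add_one h, ← div_div, div_self h]

lemma gamma_lower (m x : ℝ) (hm : 0 ≤ m) (hmx : m ≤ x) (hx : 0 < x) (k : ℕ) :
    Gamma x * m ^ k ≤ Gamma (x + k) := by
  induction k with
  | zero => simp
  | succ n ih =>
    have hxn : (0:ℝ) < x + n := by positivity
    have h1 : Gamma (x + (n+1) : ℝ) = (x + n) * Gamma (x + n) := by
      have := Real.Gamma_add_one (s := x + n) (ne_of_gt hxn)
      rw [← this]; ring_nf
    push_cast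
    push_cast at ih
    rw [h1, pow_succ]
    calc Gamma x * (m ^ n * m) = m * (Gamma x * m ^ n) := by ring
    _ ≤ (x + n) * Gamma (x + n) := by
        apply mul_le_mul (le_trans hmx (by linarith)) ih (by positivity)
        positivity

lemma rpow_split (r : ℝ) (hr : 0 < r) (μ : ℝ) (k : ℕ) :
    (r/2) ^ (μ + 2*(k:ℝ)) = (r/2)^μ * ((r/2)^2)^k := by
  have h2 : (0:ℝ) < r/2 := by linarith
  rw [Real.rpow_add h2, ← Real.rpow_natCast (r/2) 2, ← Real.rpow_natCast _ k,
    ← Real.rpow_mul h2.le]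
  push_cast
  ring_nf

lemma summable_aux (ν μ r : ℝ) (hr : 0 < r) (c : ℕ → ℝ) (hc : ∀ k, |c k| ≤ 2^k) :
    Summable (fun k : ℕ => c k / (k.factorial * Gamma (ν + k + 1)) * (r/2) ^ (μ + 2*(k:ℝ))) := by
  obtain ⟨k₀, hk₀⟩ := exists_nat_ge (1 - ν - 1)
  rw [← summable_nat_add_iff k₀]
  obtain ⟨B, hBr, hBpos⟩ : ∃ B : ℝ, (r/2)^2 = B ∧ 0 < B := ⟨_, rfl, by positivity⟩
  obtain ⟨P, hPr, hPpos⟩ : ∃ P : ℝ, (r/2)^μ = P ∧ 0 < P := ⟨_, rfl, by positivity⟩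
  have hx0 : (1:ℝ) ≤ ν + k₀ + 1 := by linarith
  have hΓ0 : 0 < Gamma (ν + k₀ + 1) := Real.Gamma_pos_of_pos (by linarith)
  set C : ℝ := 2^k₀ * (P * B^k₀) / Gamma (ν + k₀ + 1) with hC
  apply Summable.of_norm_bounded (g := fun j : ℕ => C * ((2*B)^j / j.factorial))
  · exact (Real.summable_pow_div_factorial (2*B)).mul_left C
  · intro j
    have hΓ : Gamma (ν + k₀ + 1) * 1 ^ j ≤ Gamma ((ν + k₀ + 1) + j) :=
      gamma_lower 1 _ zero_le_one hx0 (by linarith) j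
    rw [one_pow, mul_one] at hΓ
    have hΓle : Gamma (ν + k₀ + 1) ≤ Gamma (ν + (j + k₀ : ℕ) + 1) := by
      refine le_of_le_of_eq hΓ ?_; push_cast; ring_nf
    have hΓj : 0 < Gamma (ν + (j + k₀ : ℕ) + 1) := lt_of_lt_of_le hΓ0 hΓle
    have hfac : (j.factorial : ℝ) ≤ ((j + k₀).factorial : ℝ) := by
      exact_mod_cast Nat.factorial_le (Nat.le_add_right j k₀)
    have hfac0 : (0:ℝ) < (j + k₀).factorial := by positivity
    rw [Real.norm_eq_abs, abs_mul, abs_div]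
    rw [rpow_split r hr μ, hBr, hPr]
    rw [abs_of_pos (show (0:ℝ) < ((j + k₀ : ℕ).factorial : ℝ) * Gamma (ν + (j + k₀ : ℕ) + 1) by positivity)]
    rw [abs_of_pos (show (0:ℝ) < P * B ^ (j + k₀) by positivity)]
    have hcj : |c (j + k₀)| ≤ 2 ^ (j + k₀) := hc _
    calc |c (j + k₀)| / (((j + k₀).factorial : ℝ) * Gamma (ν + (j + k₀ : ℕ) + 1))
          * (P * B ^ (j + k₀))
        ≤ (2:ℝ)^(j+k₀) / ((j.factorial : ℝ) * Gamma (ν + k₀ + 1)) * (P * B ^ (j + k₀)) := by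
          apply mul_le_mul_of_nonneg_right _ (by positivity)
          exact div_le_div₀ (by positivity) hcj (by positivity)
            (mul_le_mul hfac hΓle hΓ0.le hfac0.le)
    _ = C * ((2*B)^j / j.factorial) := by
          rw [hC, pow_add, pow_add, mul_pow]
          field_simp


lemma gamma_key (x : ℝ) (k : ℕ) :
    (x + k) / ((k.factorial : ℝ) * Gamma (x + k + 1)) = 1 / (k.factorial * Gamma (x+k)) := by
  rw [div_mul_eq_div_div_swap, div_mul_eq_div_div_swap, gamma_ratio (x+k)]

lemma bessel_rec (ν r : ℝ) (hr : 0 < r) :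
    besselJ (ν-1) r + besselJ (ν+1) r = (2*ν/r) * besselJ ν r := by
  have h2 : (0:ℝ) < r/2 := by linarith
  set g : ℕ → ℝ := fun k => (-1:ℝ)^k / (k.factorial * Gamma (ν + k)) * (r/2)^(ν - 1 + 2*(k:ℝ)) with hg
  set f : ℕ → ℝ := fun k => (-(-1:ℝ)^k * k) / (k.factorial * Gamma (ν + k + 1)) * (r/2)^(ν - 1 + 2*(k:ℝ)) with hf
  have habs1 : ∀ k : ℕ, |(-1:ℝ)^k| ≤ 2^k := by
    intro k
    rw [abs_pow, abs_neg, abs_one, one_pow]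
    exact one_le_pow₀ one_le_two
  have habs2 : ∀ k : ℕ, |(-(-1:ℝ)^k * k)| ≤ 2^k := by
    intro k
    rw [abs_mul, abs_neg, abs_pow, abs_neg, abs_one, one_pow, one_mul,
      Nat.abs_cast]
    exact_mod_cast (Nat.lt_two_pow_self (n := k)).le
  have hsg : Summable g := by
    have := summable_aux (ν-1) (ν-1) r hr (fun k => (-1:ℝ)^k) habs1
    refine this.congr fun k => ?_
    have e : ν - 1 + k + 1 = ν + k := by ring
    simp only [hg, e]
  have hsf : Summable f := by
    exact summable_aux ν (ν-1) r hr (fun k => -(-1:ℝ)^k * k) habs2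
  have hsν : Summable (fun k : ℕ => (-1:ℝ)^k / (k.factorial * Gamma (ν + k + 1)) * (r/2)^(ν + 2*(k:ℝ))) :=
    summable_aux ν ν r hr (fun k => (-1:ℝ)^k) habs1
  -- besselJ (ν-1) r = ∑' g
  have hJg : besselJ (ν-1) r = ∑' k, g k := by
    refine tsum_congr fun k => ?_
    have e : ν - 1 + k + 1 = ν + k := by ring
    simp only [hg, e]
  -- besselJ (ν+1) r = ∑' f
  have hf0 : f 0 = 0 := by simp [hf]
  have hJf : besselJ (ν+1) r = ∑' k, f k := by
    have h1 : besselJ (ν+1) r = ∑' k, f (k+1) := by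
      refine tsum_congr fun k => ?_
      simp only [hf]
      have hk1 : ((k:ℝ)+1) ≠ 0 := by positivity
      congr 1
      · have efac : (((k+1).factorial : ℕ) : ℝ) = ((k:ℝ)+1) * (k.factorial:ℝ) := by
          push_cast [Nat.factorial_succ]; ring
        have eg : ν + ((k+1:ℕ):ℝ) + 1 = ν + 1 + k + 1 := by push_cast; ring
        rw [eg, efac, pow_succ]
        rw [show -((-1:ℝ)^k*(-1)) * ((k+1:ℕ):ℝ) = ((k:ℝ)+1) * (-1)^k by push_cast; ring]
        rw [mul_assoc, mul_div_mul_left _ _ hk1]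
      · congr 1
        push_cast; ring
    rw [h1, Summable.tsum_eq_zero_add hsf, hf0, zero_add]
  have hmain : (2*ν/r) * besselJ ν r = ∑' k, (g k + f k) := by
    rw [besselJ, ← tsum_mul_left]
    refine tsum_congr fun k => ?_
    have e : ν + 2*(k:ℝ) = (ν - 1 + 2*(k:ℝ)) + 1 := by ring
    rw [e, Real.rpow_add_one (ne_of_gt h2)]
    have key := gamma_key ν k
    have hrr : (2*ν/r)*(r/2) = ν := by field_simp
    simp only [hg, hf]
    linear_combination ((-1:ℝ)^k * (r/2)^(ν-1+2*(k:ℝ))) * key +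
      ((-1:ℝ)^k/(k.factorial * Gamma (ν+(k:ℝ)+1)) * (r/2)^(ν-1+2*(k:ℝ))) * hrr
  rw [hJg, hJf, hmain, Summable.tsum_add hsg hsf]

lemma bessel_bounds (μ r : ℝ) (hr : 0 < r) (hμ : 1 ≤ μ) (hB : (r/2)^2 * 4 ≤ μ + 1) :
    (1/2) * ((r/2)^μ / Gamma (μ+1)) ≤ besselJ μ r ∧
      besselJ μ r ≤ (3/2) * ((r/2)^μ / Gamma (μ+1)) := by
  have h2 : (0:ℝ) < r/2 := by linarith
  have hΓ : 0 < Gamma (μ+1) := Real.Gamma_pos_of_pos (by linarith)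
  set A : ℝ := (r/2)^μ / Gamma (μ+1) with hA
  have hApos : 0 < A := by positivity
  have habs1 : ∀ k : ℕ, |(-1:ℝ)^k| ≤ 2^k := by
    intro k
    rw [abs_pow, abs_neg, abs_one, one_pow]
    exact one_le_pow₀ one_le_two
  have hs : Summable (fun k : ℕ => (-1:ℝ)^k / (k.factorial * Gamma (μ + k + 1)) * (r/2)^(μ + 2*(k:ℝ))) :=
    summable_aux μ μ r hr (fun k => (-1:ℝ)^k) habs1
  have h0 : ((-1:ℝ)^(0:ℕ) / ((0:ℕ).factorial * Gamma (μ + (0:ℕ) + 1)) * (r/2)^(μ + 2*((0:ℕ):ℝ))) = A := by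
    norm_num
    rw [hA]
    ring
  have hsplit : besselJ μ r = A + ∑' k : ℕ,
      ((-1:ℝ)^(k+1) / ((k+1).factorial * Gamma (μ + (k+1:ℕ) + 1)) * (r/2)^(μ + 2*((k+1:ℕ):ℝ))) := by
    rw [besselJ, Summable.tsum_eq_zero_add hs, h0]
  have hterm : ∀ k : ℕ,
      |(-1:ℝ)^(k+1) / ((k+1).factorial * Gamma (μ + (k+1:ℕ) + 1)) * (r/2)^(μ + 2*((k+1:ℕ):ℝ))|
        ≤ A * (1/4)^(k+1) := by
    intro k
    have hΓk : Gamma (μ+1) * ((r/2)^2*4) ^ (k+1) ≤ Gamma ((μ+1) + (k+1:ℕ)) :=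
      gamma_lower _ _ (by positivity) hB (by linarith) (k+1)
    have hΓk' : Gamma (μ+1) * ((r/2)^2*4) ^ (k+1) ≤ Gamma (μ + (k+1:ℕ) + 1) := by
      refine hΓk.trans_eq ?_; push_cast; ring_nf
    have hfac : (1:ℝ) ≤ ((k+1).factorial : ℝ) := by exact_mod_cast Nat.one_le_iff_ne_zero.mpr (Nat.factorial_ne_zero _)
    have hΓkpos : 0 < Gamma (μ + (k+1:ℕ) + 1) :=
      lt_of_lt_of_le (by positivity) hΓk'
    rw [abs_mul, abs_div, abs_pow, abs_neg, abs_one, one_pow, one_div,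
      abs_of_pos (by positivity : (0:ℝ) < ((k+1).factorial : ℝ) * Gamma (μ + (k+1:ℕ) + 1)),
      abs_of_pos (Real.rpow_pos_of_pos h2 _), rpow_split r hr]
    rw [hA]
    have hd : Gamma (μ+1) * ((r/2)^2*4) ^ (k+1) ≤ ((k+1).factorial : ℝ) * Gamma (μ + (k+1:ℕ) + 1) := by
      calc Gamma (μ+1) * ((r/2)^2*4) ^ (k+1) ≤ Gamma (μ + (k+1:ℕ) + 1) := hΓk'
      _ ≤ ((k+1).factorial : ℝ) * Gamma (μ + (k+1:ℕ) + 1) := le_mul_of_one_le_left hΓkpos.le hfac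
    calc (((k+1).factorial : ℝ) * Gamma (μ + (k+1:ℕ) + 1))⁻¹ * ((r/2)^μ * ((r/2)^2)^(k+1))
        ≤ (Gamma (μ+1) * ((r/2)^2*4) ^ (k+1))⁻¹ * ((r/2)^μ * ((r/2)^2)^(k+1)) := by
          apply mul_le_mul_of_nonneg_right _ (by positivity)
          exact inv_anti₀ (by positivity) hd
    _ = (r/2)^μ / Gamma (μ+1) * (1/4)^(k+1) := by
          rw [mul_pow]
          field_simp
          ring_nf
          rw [← mul_pow]
          norm_num
  obtain ⟨F, hF⟩ : ∃ F : ℕ → ℝ, F = fun k : ℕ =>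
      ((-1:ℝ)^(k+1) / ((k+1).factorial * Gamma (μ + (k+1:ℕ) + 1)) * (r/2)^(μ + 2*((k+1:ℕ):ℝ))) := ⟨_, rfl⟩
  rw [← hF] at hsplit
  have hterm' : ∀ k : ℕ, |F k| ≤ A * (1/4)^(k+1) := by rw [hF]; exact hterm
  have hssucc : Summable F := by rw [hF]; exact (summable_nat_add_iff 1).mpr hs
  have hsgeo : Summable (fun k : ℕ => A * (1/4:ℝ)^(k+1)) := by
    have hgeo : Summable (fun k : ℕ => (1/4:ℝ)^k) :=
      summable_geometric_of_lt_one (by norm_num) (by norm_num)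
    exact (hgeo.mul_left (A*(1/4))).congr fun k => by rw [pow_succ]; ring
  have htail : |∑' k : ℕ, F k| ≤ A / 2 := by
    have habs_tsum : |∑' k : ℕ, F k| ≤ ∑' k : ℕ, |F k| := by
      have h1 := norm_tsum_le_tsum_norm (f := F) hssucc.norm
      simpa [Real.norm_eq_abs] using h1
    calc |∑' k : ℕ, F k| ≤ ∑' k : ℕ, |F k| := habs_tsum
    _ ≤ ∑' k : ℕ, A * (1/4:ℝ)^(k+1) := Summable.tsum_le_tsum hterm' hssucc.abs hsgeo
    _ = A * (1/4) * ∑' k : ℕ, (1/4:ℝ)^k := by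
          rw [← tsum_mul_left]
          refine tsum_congr fun k => ?_
          rw [pow_succ]
          ring
    _ = A * (1/4) * (1 - 1/4)⁻¹ := by rw [tsum_geometric_of_lt_one (by norm_num) (by norm_num)]
    _ ≤ A / 2 := by rw [show ((1:ℝ) - 1/4)⁻¹ = 4/3 by norm_num]; nlinarith
  rw [hsplit]
  rw [abs_le] at htail
  constructor <;> [linarith [htail.1]; linarith [htail.2]]

def seq (s q a0 a1 : ℚ) : ℕ → ℚ
  | 0 => a0
  | 1 => a1
  | (n+2) => 2*(s + n + 1) * seq s q a0 a1 (n+1) - q * seq s q a0 a1 n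

lemma den_mul_self (x : ℚ) : (x.den : ℚ) * x = (x.num : ℚ) := by
  rw [mul_comm, Rat.mul_den_eq_num]

lemma seq_int (s q a0 a1 : ℚ) :
    ∀ n : ℕ, ∃ m : ℤ, ((a0.den * a1.den : ℕ) : ℚ) * (((2*s).den * q.den : ℕ) : ℚ)^n
      * seq s q a0 a1 n = (m : ℚ) := by
  have hD2s : (((2*s).den * q.den : ℕ) : ℚ) * (2*s) = ((q.den : ℤ) * (2*s).num : ℤ) := by
    have h := den_mul_self (2*s)
    push_cast
    linear_combination (q.den : ℚ) * h
  have hDq : (((2*s).den * q.den : ℕ) : ℚ) * q = (((2*s).den : ℤ) * q.num : ℤ) := by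
    have h := den_mul_self q
    push_cast
    linear_combination ((2*s).den : ℚ) * h
  intro n
  induction n using Nat.twoStepInduction with
  | zero =>
    refine ⟨a1.den * a0.num, ?_⟩
    have h := den_mul_self a0
    simp only [seq, pow_zero, mul_one]
    push_cast
    linear_combination (a1.den : ℚ) * h
  | one =>
    refine ⟨(a0.den : ℤ) * ((2*s).den * q.den : ℕ) * a1.num, ?_⟩
    have h := den_mul_self a1
    simp only [seq, pow_one]
    push_cast
    linear_combination ((a0.den : ℚ) * ((2*s).den : ℚ) * (q.den : ℚ)) * h
  | more n ih0 ih1 =>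
    obtain ⟨m0, hm0⟩ := ih0
    obtain ⟨m1, hm1⟩ := ih1
    refine ⟨((q.den : ℤ) * (2*s).num + ((2*s).den * q.den : ℕ) * (2*(n+1))) * m1
      - ((2*s).den : ℤ) * q.num * ((2*s).den * q.den : ℕ) * m0, ?_⟩
    have hseq : seq s q a0 a1 (n+2)
        = 2*(s + n + 1) * seq s q a0 a1 (n+1) - q * seq s q a0 a1 n := rfl
    rw [hseq]
    have expand : ((a0.den * a1.den : ℕ) : ℚ) * (((2*s).den * q.den : ℕ) : ℚ)^(n+2)
          * (2*(s+n+1) * seq s q a0 a1 (n+1) - q * seq s q a0 a1 n)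
        = ((((2*s).den * q.den : ℕ) : ℚ)*(2*s) + (((2*s).den * q.den : ℕ) : ℚ)*(2*((n:ℚ)+1)))
            * (((a0.den * a1.den : ℕ) : ℚ) * (((2*s).den * q.den : ℕ) : ℚ)^(n+1) * seq s q a0 a1 (n+1))
          - ((((2*s).den * q.den : ℕ) : ℚ) * q) * (((2*s).den * q.den : ℕ) : ℚ)
            * (((a0.den * a1.den : ℕ) : ℚ) * (((2*s).den * q.den : ℕ) : ℚ)^n * seq s q a0 a1 n) := by
      ring
    rw [expand, hm0, hm1, hD2s, hDq]
    push_cast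
    ring

set_option maxHeartbeats 1000000 in
lemma key (s : ℚ) (r : ℝ) (hr : 0 < r) (q : ℚ) (hq : r^2 = (q:ℝ))
    (lam : ℝ) (hlam : lam ≠ 0) (a0 a1 : ℚ)
    (h0 : (a0:ℝ) * lam = besselJ (s:ℝ) r)
    (h1 : (a1:ℝ) * lam = r * besselJ ((s:ℝ)+1) r) : False := by
  set a : ℕ → ℚ := seq s q a0 a1 with ha
  have hJ : ∀ n : ℕ, ((a n : ℚ) : ℝ) * lam = r^n * besselJ ((s:ℝ) + (n:ℝ)) r := by
    intro n
    induction n using Nat.twoStepInduction with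
    | zero => simpa [ha, seq] using h0
    | one => simpa [ha, seq] using h1
    | more n ih0 ih1 =>
      have hrec := bessel_rec ((s:ℝ) + (n:ℝ) + 1) r hr
      have hrec' : r * (besselJ ((s:ℝ) + (n:ℝ) + 1 - 1) r + besselJ ((s:ℝ) + (n:ℝ) + 1 + 1) r)
          = 2*((s:ℝ) + (n:ℝ) + 1) * besselJ ((s:ℝ) + (n:ℝ) + 1) r := by
        rw [hrec]; field_simp
      have e0 : (s:ℝ) + (n:ℝ) + 1 - 1 = (s:ℝ) + (n:ℝ) := by ring
      have e2 : (s:ℝ) + (n:ℝ) + 1 + 1 = (s:ℝ) + ((n:ℝ) + 2) := by ring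
      rw [e0, e2] at hrec'
      have hseq : a (n+2) = 2*(s + n + 1) * a (n+1) - q * a n := rfl
      have ecast2 : (((n+2:ℕ)):ℝ) = (n:ℝ) + 2 := by push_cast; ring
      have ecast1 : (((n+1:ℕ)):ℝ) = (n:ℝ) + 1 := by push_cast; ring
      rw [ecast1] at ih1
      rw [ecast2, hseq]
      have hcast : ((2*(s + n + 1) * a (n+1) - q * a n : ℚ) : ℝ)
          = 2*((s:ℝ) + (n:ℝ) + 1) * ((a (n+1) : ℚ) : ℝ) - (q:ℝ) * ((a n : ℚ) : ℝ) := by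
        push_cast; ring
      rw [hcast]
      have e3 : (s:ℝ) + ((n:ℝ) + 1) = (s:ℝ) + (n:ℝ) + 1 := by ring
      rw [e3] at ih1
      calc (2*((s:ℝ) + (n:ℝ) + 1) * ((a (n+1) : ℚ) : ℝ) - (q:ℝ) * ((a n : ℚ) : ℝ)) * lam
          = 2*((s:ℝ) + (n:ℝ) + 1) * (((a (n+1) : ℚ) : ℝ) * lam)
            - (q:ℝ) * (((a n : ℚ) : ℝ) * lam) := by ring
      _ = 2*((s:ℝ) + (n:ℝ) + 1) * (r^(n+1) * besselJ ((s:ℝ) + (n:ℝ) + 1) r)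
            - r^2 * (r^n * besselJ ((s:ℝ) + (n:ℝ)) r) := by rw [ih1, ih0, hq]
      _ = r^(n+2) * besselJ ((s:ℝ) + ((n:ℝ) + 2)) r := by linear_combination (-(r^(n+1))) * hrec'
  have hint := seq_int s q a0 a1
  have h2 : (0:ℝ) < r/2 := by linarith
  obtain ⟨Dn, hDn⟩ : ∃ D : ℕ, D = (2*s).den * q.den := ⟨_, rfl⟩
  obtain ⟨En, hEn⟩ : ∃ E : ℕ, E = a0.den * a1.den := ⟨_, rfl⟩
  simp only [← hDn, ← hEn] at hint
  have hDpos : (0:ℝ) < (Dn : ℝ) := by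
    have : 0 < Dn := hDn ▸ mul_pos (2*s).pos q.pos
    exact_mod_cast this
  have hEpos : (0:ℝ) < (En : ℝ) := by
    have : 0 < En := hEn ▸ mul_pos a0.pos a1.pos
    exact_mod_cast this
  set K : ℝ := (Dn:ℝ) * r^2 / 2 with hK
  have hKpos : 0 < K := by positivity
  set mm : ℝ := 2*K + 2 with hmm
  have hmmpos : 0 < mm := by positivity
  obtain ⟨n₀, hn₀⟩ := exists_nat_ge (max (max (1 - (s:ℝ)) ((r/2)^2*4 - (s:ℝ) - 1)) (mm - (s:ℝ) - 1))
  have hn₀1 : 1 - (s:ℝ) ≤ n₀ := le_trans (le_max_of_le_left (le_max_left _ _)) hn₀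
  have hn₀2 : (r/2)^2*4 - (s:ℝ) - 1 ≤ n₀ := le_trans (le_max_of_le_left (le_max_right _ _)) hn₀
  have hn₀3 : mm - (s:ℝ) - 1 ≤ n₀ := le_trans (le_max_right _ _) hn₀
  have hx₀pos : (0:ℝ) < (s:ℝ) + n₀ + 1 := by nlinarith
  have hΓ₀pos : 0 < Gamma ((s:ℝ) + n₀ + 1) := Real.Gamma_pos_of_pos hx₀pos
  have hlamabs : 0 < |lam| := abs_pos.mpr hlam
  set C1 : ℝ := (3/2) * En * (r/2)^((s:ℝ)) * K^n₀ / Gamma ((s:ℝ) + n₀ + 1) with hC1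
  have hC1pos : 0 < C1 := by
    rw [hC1]
    have := Real.rpow_pos_of_pos h2 ((s:ℝ))
    positivity
  obtain ⟨j, hj⟩ := pow_unbounded_of_one_lt (C1 / |lam|) (one_lt_two (α := ℝ))
  set n : ℕ := n₀ + j with hn
  have hnn₀ : (n₀:ℝ) ≤ (n:ℝ) := by exact_mod_cast Nat.le_add_right n₀ j
  have hμ1 : (1:ℝ) ≤ (s:ℝ) + n := by linarith
  have hμ2 : (r/2)^2*4 ≤ (s:ℝ) + n + 1 := by linarith
  obtain ⟨hJlo, hJhi⟩ := bessel_bounds ((s:ℝ) + n) r hr hμ1 hμ2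
  have hΓnpos : 0 < Gamma ((s:ℝ) + n + 1) := Real.Gamma_pos_of_pos (by linarith)
  have hJpos : 0 < besselJ ((s:ℝ) + n) r := by
    refine lt_of_lt_of_le ?_ hJlo
    have := Real.rpow_pos_of_pos h2 ((s:ℝ) + n)
    positivity
  have hJn := hJ n
  have han : (((a n : ℚ)):ℝ) ≠ 0 := by
    intro hzero
    rw [hzero, zero_mul] at hJn
    have hpos : 0 < r^n * besselJ ((s:ℝ) + n) r := by positivity
    rw [← hJn] at hpos
    exact lt_irrefl 0 hpos
  obtain ⟨mz, hmz⟩ := hint n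
  have hmzne : mz ≠ 0 := by
    intro hz
    apply han
    rw [hz] at hmz
    push_cast at hmz
    rcases mul_eq_zero.mp hmz with h | h
    · exfalso
      have : (0:ℚ) < (En:ℚ) * (Dn:ℚ)^n := by
        have h1 : (0:ℚ) < (En:ℚ) := by exact_mod_cast hEpos
        have h2 : (0:ℚ) < (Dn:ℚ) := by exact_mod_cast hDpos
        positivity
      rw [h] at this
      exact lt_irrefl 0 this
    · exact_mod_cast congrArg (fun x : ℚ => (x : ℝ)) h
  have hlow : (1:ℝ) ≤ (En:ℝ) * (Dn:ℝ)^n * |((a n : ℚ) : ℝ)| := by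
    have habs : (1:ℚ) ≤ |(En:ℚ) * (Dn:ℚ)^n * a n| := by
      rw [hmz]
      exact_mod_cast Int.one_le_abs hmzne
    rw [abs_mul, abs_mul, abs_pow,
      abs_of_nonneg (show (0:ℚ) ≤ (En:ℚ) by positivity),
      abs_of_nonneg (show (0:ℚ) ≤ (Dn:ℚ) by positivity)] at habs
    exact_mod_cast habs
  have hup : |((a n : ℚ) : ℝ)| * |lam| = r^n * besselJ ((s:ℝ) + n) r := by
    rw [← abs_mul, hJn, abs_of_pos (by positivity)]
  have hΓlow : Gamma ((s:ℝ) + n₀ + 1) * mm^j ≤ Gamma ((s:ℝ) + n + 1) := by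
    have hmmx : mm ≤ (s:ℝ) + n₀ + 1 := by linarith
    have hg := gamma_lower mm ((s:ℝ) + n₀ + 1) hmmpos.le hmmx hx₀pos j
    refine hg.trans_eq ?_
    congr 1
    rw [hn]
    push_cast
    ring
  have hrsplit : (r/2)^((s:ℝ) + (n:ℝ)) = (r/2)^((s:ℝ)) * (r/2)^(n:ℕ) := by
    rw [Real.rpow_add h2, Real.rpow_natCast]
  have hmain : |lam| ≤ C1 * (1/2)^j := by
    have step1 : |lam| ≤ (En:ℝ) * (Dn:ℝ)^n * |((a n : ℚ) : ℝ)| * |lam| := by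
      calc |lam| = 1 * |lam| := (one_mul _).symm
      _ ≤ (En:ℝ) * (Dn:ℝ)^n * |((a n : ℚ) : ℝ)| * |lam| :=
          mul_le_mul_of_nonneg_right hlow hlamabs.le
    have step2 : (En:ℝ) * (Dn:ℝ)^n * |((a n : ℚ) : ℝ)| * |lam|
        = (En:ℝ) * (Dn:ℝ)^n * (r^n * besselJ ((s:ℝ) + n) r) := by
      rw [mul_assoc ((En:ℝ) * (Dn:ℝ)^n), hup]
    have step3 : (En:ℝ) * (Dn:ℝ)^n * (r^n * besselJ ((s:ℝ) + n) r)
        ≤ (En:ℝ) * (Dn:ℝ)^n * (r^n * ((3/2) * ((r/2)^((s:ℝ) + (n:ℝ)) / Gamma ((s:ℝ) + n + 1)))) := by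
      apply mul_le_mul_of_nonneg_left _ (by positivity)
      exact mul_le_mul_of_nonneg_left hJhi (by positivity)
    have step4 : (En:ℝ) * (Dn:ℝ)^n * (r^n * ((3/2) * ((r/2)^((s:ℝ) + (n:ℝ)) / Gamma ((s:ℝ) + n + 1))))
        = (3/2) * (En:ℝ) * (r/2)^((s:ℝ)) * K^n / Gamma ((s:ℝ) + n + 1) := by
      rw [hrsplit, hK]
      rw [show ((Dn:ℝ) * r^2/2)^n = (Dn:ℝ)^n * r^n * (r/2)^n by
        rw [← mul_pow, ← mul_pow]; congr 1; ring]
      field_simp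
    have step5 : (3/2) * (En:ℝ) * (r/2)^((s:ℝ)) * K^n / Gamma ((s:ℝ) + n + 1)
        ≤ (3/2) * (En:ℝ) * (r/2)^((s:ℝ)) * K^n / (Gamma ((s:ℝ) + n₀ + 1) * mm^j) := by
      apply div_le_div_of_nonneg_left _ (by positivity) hΓlow
      have := Real.rpow_pos_of_pos h2 ((s:ℝ))
      positivity
    have step6 : (3/2) * (En:ℝ) * (r/2)^((s:ℝ)) * K^n / (Gamma ((s:ℝ) + n₀ + 1) * mm^j)
        = C1 * (K/mm)^j := by
      rw [hC1, hn, pow_add, div_pow]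
      field_simp
      ring_nf
      rw [inv_pow, mul_assoc, mul_inv_cancel₀ (by positivity), mul_one]
    have step7 : C1 * (K/mm)^j ≤ C1 * (1/2)^j := by
      apply mul_le_mul_of_nonneg_left _ hC1pos.le
      apply pow_le_pow_left₀ (by positivity)
      rw [div_le_div_iff₀ hmmpos (by norm_num : (0:ℝ) < 2)]
      linarith
    calc |lam| ≤ _ := step1
    _ = _ := step2
    _ ≤ _ := step3
    _ = _ := step4
    _ ≤ _ := step5
    _ = C1 * (K/mm)^j := step6
    _ ≤ C1 * (1/2)^j := step7
  have hfinal : C1 * (1/2)^j < |lam| := by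
    rw [div_lt_iff₀ hlamabs] at hj
    have h2j : (0:ℝ) < 2^j := by positivity
    rw [show ((1:ℝ)/2)^j = ((2:ℝ)^j)⁻¹ by rw [one_div, inv_pow]]
    rw [← div_eq_mul_inv, div_lt_iff₀ h2j, mul_comm]
    exact hj
  linarith

theorem besselJ_ratio_irrational' (s : ℚ) (r : ℝ) (hr : 0 < r)
    (hq : ∃ q : ℚ, r ^ 2 = (q : ℝ)) :
    Irrational (r * besselJ ((s : ℝ) + 1) r / besselJ (s : ℝ) r) := by
  obtain ⟨q, hq⟩ := hq
  by_contra h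
  obtain ⟨t, ht⟩ : ∃ t : ℚ, (t:ℝ) = r * besselJ ((s : ℝ) + 1) r / besselJ (s : ℝ) r := by
    rw [Irrational] at h
    push_neg at h
    exact h
  rcases eq_or_ne (besselJ (s:ℝ) r) 0 with hz | hnz
  · rcases eq_or_ne (besselJ ((s:ℝ)+1) r) 0 with hz1 | hnz1
    · exact key s r hr q hq 1 one_ne_zero 0 0 (by simp [hz]) (by simp [hz1])
    · exact key s r hr q hq (r * besselJ ((s:ℝ)+1) r)
        (mul_ne_zero (ne_of_gt hr) hnz1) 0 1 (by simp [hz]) (by simp)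
  · have hts : (t:ℝ) * besselJ (s:ℝ) r = r * besselJ ((s:ℝ)+1) r := by
      rw [ht, div_mul_cancel₀ _ hnz]
    exact key s r hr q hq (besselJ (s:ℝ) r) hnz 1 t (by simp) hts
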